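/- Every cancellative commutative Hausdorff locally compact σ-compact topological semigroup with open shifts has countable cellularity; that is, every pairwise disjoint family of nonempty open subsets of S is countable. -/

import Mathlib

open Filter Topology Set Pointwise

set_option linter.unusedSectionVars false

namespace CellAux

variable {S : Type*} [CommSemigroup S] [IsCancelMul S]

/-- Covering property: the translate `K*x` is covered by the translates `a*V`, `a ∈ t`. -/
def covP (K V : Set S) (x : S) (t : Finset S) : Prop :=
  ∀ k ∈ K, ∃ a ∈ t, ∃ v ∈ V, k * x = a * v

/-- Covering index. -/
noncomputable def ind (K V : Set S) : ℕ :=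
  sInf {n | ∃ x : S, ∃ t : Finset S, covP K V x t ∧ t.card = n}

theorem ind_le {K V : Set S} {x : S} {t : Finset S} (h : covP K V x t) :
    ind K V ≤ t.card :=
  Nat.sInf_le ⟨x, t, h, rfl⟩

theorem ind_spec {K V : Set S} (h : ∃ x t, covP K V x t) :
    ∃ x t, covP K V x t ∧ t.card = ind K V := by
  obtain ⟨x, t, hxt⟩ := h
  have := Nat.sInf_mem (s := {n | ∃ x : S, ∃ t : Finset S, covP K V x t ∧ t.card = n})
    ⟨t.card, x, t, hxt, rfl⟩
  obtain ⟨x', t', h', hc⟩ := this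
  exact ⟨x', t', h', hc⟩

theorem one_le_ind {K V : Set S} (hex : ∃ x t, covP K V x t) (hne : K.Nonempty) :
    1 ≤ ind K V := by
  obtain ⟨x, t, hc, hcard⟩ := ind_spec hex
  obtain ⟨k, hk⟩ := hne
  obtain ⟨a, ha, -⟩ := hc k hk
  have := Finset.card_pos.2 ⟨a, ha⟩
  omega

theorem ind_mono {K K' V : Set S} (h : ∃ x t, covP K' V x t) (hKK' : K ⊆ K') :
    ind K V ≤ ind K' V := by
  obtain ⟨x, t, hc, hcard⟩ := ind_spec h
  calc ind K V ≤ t.card := ind_le fun k hk => hc k (hKK' hk)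
  _ = ind K' V := hcard

theorem covP_comp [DecidableEq S] {K Ω C V : Set S} {x y : S} {t u : Finset S}
    (h1 : covP K Ω x t) (h2 : covP C V y u) (hΩC : Ω ⊆ C) :
    covP K V (x * y) (t * u) := by
  classical
  intro k hk
  obtain ⟨a, ha, w, hw, e1⟩ := h1 k hk
  obtain ⟨b, hb, v, hv, e2⟩ := h2 w (hΩC hw)
  refine ⟨a * b, Finset.mul_mem_mul ha hb, v, hv, ?_⟩
  calc k * (x * y) = (k * x) * y := (mul_assoc ..).symm
  _ = (a * w) * y := by rw [e1]
  _ = a * (w * y) := mul_assoc ..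
  _ = a * (b * v) := by rw [e2]
  _ = (a * b) * v := (mul_assoc ..).symm

theorem ind_comp_le {K Ω C V : Set S}
    (h1 : ∃ x t, covP K Ω x t) (h2 : ∃ x t, covP C V x t) (hΩC : Ω ⊆ C) :
    ind K V ≤ ind K Ω * ind C V := by
  classical
  obtain ⟨x, t, hc1, hcard1⟩ := ind_spec h1
  obtain ⟨y, u, hc2, hcard2⟩ := ind_spec h2
  calc ind K V ≤ (t * u).card := ind_le (covP_comp hc1 hc2 hΩC)
  _ ≤ t.card * u.card := Finset.card_mul_le
  _ = ind K Ω * ind C V := by rw [hcard1, hcard2]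

theorem ind_union_le {K L V : Set S}
    (h1 : ∃ x t, covP K V x t) (h2 : ∃ x t, covP L V x t) :
    ind (K ∪ L) V ≤ ind K V + ind L V := by
  classical
  obtain ⟨x, t, hc1, hcard1⟩ := ind_spec h1
  obtain ⟨y, u, hc2, hcard2⟩ := ind_spec h2
  have hcov : covP (K ∪ L) V (x * y) (t.image (· * y) ∪ u.image (· * x)) := by
    rintro k (hk | hk)
    · obtain ⟨a, ha, v, hv, e⟩ := hc1 k hk
      refine ⟨a * y, Finset.mem_union_left _ (Finset.mem_image_of_mem _ ha), v, hv, ?_⟩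
      calc k * (x * y) = (k * x) * y := (mul_assoc ..).symm
      _ = (a * v) * y := by rw [e]
      _ = (a * y) * v := mul_right_comm ..
    · obtain ⟨b, hb, v, hv, e⟩ := hc2 k hk
      refine ⟨b * x, Finset.mem_union_right _ (Finset.mem_image_of_mem _ hb), v, hv, ?_⟩
      calc k * (x * y) = k * (y * x) := by rw [mul_comm x y]
      _ = (k * y) * x := (mul_assoc ..).symm
      _ = (b * v) * x := by rw [e]
      _ = (b * x) * v := mul_right_comm ..
  calc ind (K ∪ L) V ≤ _ := ind_le hcov
  _ ≤ (t.image (· * y)).card + (u.image (· * x)).card := Finset.card_union_le ..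
  _ ≤ t.card + u.card := add_le_add Finset.card_image_le Finset.card_image_le
  _ = ind K V + ind L V := by rw [hcard1, hcard2]

theorem ind_union_ge {K L V : Set S}
    (hex : ∃ x t, covP (K ∪ L) V x t)
    (hsep : ∀ k ∈ K, ∀ l ∈ L, ∀ v ∈ V, ∀ w ∈ V, k * v ≠ l * w) :
    ind K V + ind L V ≤ ind (K ∪ L) V := by
  classical
  obtain ⟨x, t, hc, hcard⟩ := ind_spec hex
  set tK := t.filter (fun a => ∃ k ∈ K, ∃ v ∈ V, k * x = a * v) with htK
  set tL := t.filter (fun a => ∃ l ∈ L, ∃ v ∈ V, l * x = a * v) with htL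
  have hcK : covP K V x tK := by
    intro k hk
    obtain ⟨a, ha, v, hv, e⟩ := hc k (Or.inl hk)
    exact ⟨a, Finset.mem_filter.2 ⟨ha, k, hk, v, hv, e⟩, v, hv, e⟩
  have hcL : covP L V x tL := by
    intro l hl
    obtain ⟨a, ha, v, hv, e⟩ := hc l (Or.inr hl)
    exact ⟨a, Finset.mem_filter.2 ⟨ha, l, hl, v, hv, e⟩, v, hv, e⟩
  have hdisj : Disjoint tK tL := by
    rw [Finset.disjoint_left]
    intro a haK haL
    obtain ⟨-, k, hk, v1, hv1, e1⟩ := Finset.mem_filter.1 haK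
    obtain ⟨-, l, hl, v2, hv2, e2⟩ := Finset.mem_filter.1 haL
    refine hsep k hk l hl v2 hv2 v1 hv1 ?_
    have h1 : (k * v2) * x = a * (v1 * v2) := by
      calc (k * v2) * x = (k * x) * v2 := mul_right_comm ..
      _ = (a * v1) * v2 := by rw [e1]
      _ = a * (v1 * v2) := mul_assoc ..
    have h2 : (l * v1) * x = a * (v1 * v2) := by
      calc (l * v1) * x = (l * x) * v1 := mul_right_comm ..
      _ = (a * v2) * v1 := by rw [e2]
      _ = a * (v2 * v1) := mul_assoc ..
      _ = a * (v1 * v2) := by rw [mul_comm v2 v1]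
    exact mul_right_cancel (h1.trans h2.symm)
  calc ind K V + ind L V ≤ tK.card + tL.card := add_le_add (ind_le hcK) (ind_le hcL)
  _ = (tK ∪ tL).card := (Finset.card_union_of_disjoint hdisj).symm
  _ ≤ t.card := Finset.card_le_card (Finset.union_subset (Finset.filter_subset _ _)
      (Finset.filter_subset _ _))
  _ = ind (K ∪ L) V := hcard



section Top

variable [TopologicalSpace S] [ContinuousMul S]

theorem exists_cov (ho : ∀ a : S, IsOpenMap fun s : S => a * s)
    {K V : Set S} (hK : IsCompact K) (hV : IsOpen V) (hne : V.Nonempty) :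
    ∃ x t, covP K V x t := by
  classical
  obtain ⟨v0, hv0⟩ := hne
  have hopen : ∀ s : S, IsOpen ((fun b => b * v0) ⁻¹' ((fun y => s * y) '' V)) :=
    fun s => (continuous_mul_right v0).isOpen_preimage _ ((ho s) V hV)
  have hcov : K ⊆ ⋃ s : S, (fun b => b * v0) ⁻¹' ((fun y => s * y) '' V) := by
    intro k hk
    exact mem_iUnion.2 ⟨k, ⟨v0, hv0, rfl⟩⟩
  obtain ⟨t, ht⟩ := hK.elim_finite_subcover _ hopen hcov
  refine ⟨v0, t, fun k hk => ?_⟩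
  obtain ⟨a, ha, v, hv, e⟩ := by simpa using ht hk
  exact ⟨a, ha, v, hv, e.symm⟩

/-- Tube lemma style statement. -/
theorem exists_tube {K W : Set S} (p : S) (hK : IsCompact K) (hW : IsOpen W)
    (h : ∀ k ∈ K, k * p ∈ W) :
    ∃ P : Set S, IsOpen P ∧ p ∈ P ∧ ∀ k ∈ K, ∀ q ∈ P, k * q ∈ W := by
  classical
  have key : ∀ k : S, k ∈ K → ∃ A P : Set S, IsOpen A ∧ IsOpen P ∧ k ∈ A ∧ p ∈ P ∧
      ∀ a ∈ A, ∀ q ∈ P, a * q ∈ W := by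
    intro k hk
    have hc : Continuous fun z : S × S => z.1 * z.2 := continuous_mul
    have hpre : IsOpen ((fun z : S × S => z.1 * z.2) ⁻¹' W) := hW.preimage hc
    have hmem : (k, p) ∈ (fun z : S × S => z.1 * z.2) ⁻¹' W := h k hk
    obtain ⟨A, P, hA, hP, hkA, hpP, hsub⟩ := isOpen_prod_iff.1 hpre k p hmem
    exact ⟨A, P, hA, hP, hkA, hpP, fun a ha q hq => hsub (Set.mk_mem_prod ha hq)⟩
  choose! A P hA hP hkA hpP hprod using key
  have hcov : K ⊆ ⋃ k ∈ K, A k := fun k hk => mem_iUnion₂.2 ⟨k, hk, hkA k hk⟩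
  obtain ⟨t, ht⟩ := hK.elim_finite_subcover_image (fun k hk => hA k hk) hcov
  obtain ⟨hts, htc, htcov⟩ := ht
  refine ⟨⋂ k ∈ htc.toFinset, P k, ?_, ?_, ?_⟩
  · exact isOpen_biInter_finset fun k hk => hP k (hts (by simpa using hk))
  · exact mem_iInter₂.2 fun k hk => hpP k (hts (by simpa using hk))
  · intro k hk q hq
    obtain ⟨a, hat, hka⟩ := mem_iUnion₂.1 (htcov hk)
    have haK : a ∈ K := hts hat
    have hqa : q ∈ P a := mem_iInter₂.1 hq a (by simpa using hat)
    exact hprod a haK k hka q hqa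

variable [T2Space S]

/-- Separation: for disjoint compact sets there is a nonempty open `V`
(containing any prescribed point) with `K*V` disjoint from `L*V`. -/
theorem exists_sep {K L : Set S} (p : S) (hK : IsCompact K) (hL : IsCompact L)
    (hd : Disjoint K L) :
    ∃ V : Set S, IsOpen V ∧ p ∈ V ∧
      ∀ k ∈ K, ∀ l ∈ L, ∀ v ∈ V, ∀ w ∈ V, k * v ≠ l * w := by
  have hKp : IsCompact ((fun k => k * p) '' K) := hK.image (continuous_mul_right p)
  have hLp : IsCompact ((fun k => k * p) '' L) := hL.image (continuous_mul_right p)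
  have hdp : Disjoint ((fun k => k * p) '' K) ((fun k => k * p) '' L) := by
    rw [Set.disjoint_left]
    rintro x ⟨k, hk, rfl⟩ ⟨l, hl, e⟩
    have : l = k := mul_right_cancel e
    subst this
    exact (Set.disjoint_left.1 hd hk) hl
  obtain ⟨W1, W2, hW1, hW2, hKW1, hLW2, hWd⟩ :=
    SeparatedNhds.of_isCompact_isCompact hKp hLp hdp
  obtain ⟨P1, hP1, hpP1, h1⟩ := exists_tube p hK hW1
    (fun k hk => hKW1 ⟨k, hk, rfl⟩)
  obtain ⟨P2, hP2, hpP2, h2⟩ := exists_tube p hL hW2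
    (fun l hl => hLW2 ⟨l, hl, rfl⟩)
  refine ⟨P1 ∩ P2, hP1.inter hP2, ⟨hpP1, hpP2⟩, ?_⟩
  intro k hk l hl v hv w hw e
  have m1 : k * v ∈ W1 := h1 k hk v hv.1
  have m2 : l * w ∈ W2 := h2 l hl w hw.2
  rw [e] at m1
  exact (Set.disjoint_left.1 hWd m1) m2

end Top

section Ultra

variable (S) in
/-- Index type: nonempty open subsets of `S`. -/
def Idx [TopologicalSpace S] : Type _ := {V : Set S // IsOpen V ∧ V.Nonempty}

variable [TopologicalSpace S]

/-- `A` refines `B` if `A` is contained in a translate of `B`. -/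
def Dset (B : Idx S) : Set (Idx S) := {A | ∃ a : S, A.1 ⊆ (fun y => a * y) '' B.1}

theorem exists_ultra [Nonempty S] (ho : ∀ a : S, IsOpenMap fun s : S => a * s) :
    ∃ U : Ultrafilter (Idx S), ∀ B : Idx S, Dset B ∈ U := by
  have hne : Nonempty (Idx S) := ⟨⟨Set.univ, isOpen_univ, Set.univ_nonempty⟩⟩
  have hDne : ∀ B : Idx S, (Dset B).Nonempty := by
    intro B
    obtain ⟨b, hb⟩ := B.2.2
    exact ⟨⟨(fun y => b * y) '' B.1, (ho b) _ B.2.1, ⟨b * b, b, hb, rfl⟩⟩, b, subset_rfl⟩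
  have hdir : Directed (· ≥ ·) (fun B : Idx S => (𝓟 (Dset B) : Filter (Idx S))) := by
    intro B1 B2
    obtain ⟨b1, hb1⟩ := B1.2.2
    obtain ⟨b2, hb2⟩ := B2.2.2
    refine ⟨⟨((fun y => b2 * y) '' B1.1) ∩ ((fun y => b1 * y) '' B2.1),
      ((ho b2) _ B1.2.1).inter ((ho b1) _ B2.2.1),
      ⟨b1 * b2, ⟨b1, hb1, mul_comm b2 b1 ▸ rfl⟩, ⟨b2, hb2, rfl⟩⟩⟩, ?_, ?_⟩
    · refine Filter.principal_mono.2 fun A hA => ?_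
      obtain ⟨a, hsub⟩ := hA
      refine ⟨a * b2, fun z hz => ?_⟩
      obtain ⟨y, hy, rfl⟩ := hsub hz
      obtain ⟨y1, hy1, rfl⟩ := hy.1
      exact ⟨y1, hy1, mul_assoc a b2 y1⟩
    · refine Filter.principal_mono.2 fun A hA => ?_
      obtain ⟨a, hsub⟩ := hA
      refine ⟨a * b1, fun z hz => ?_⟩
      obtain ⟨y, hy, rfl⟩ := hsub hz
      obtain ⟨y2, hy2, rfl⟩ := hy.2
      exact ⟨y2, hy2, mul_assoc a b1 y2⟩
  have hNeBot : ∀ B : Idx S, (𝓟 (Dset B) : Filter (Idx S)).NeBot :=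
    fun B => Filter.principal_neBot_iff.2 (hDne B)
  have : (⨅ B : Idx S, (𝓟 (Dset B) : Filter (Idx S))).NeBot :=
    Filter.iInf_neBot_of_directed hdir hNeBot
  refine ⟨Ultrafilter.of (⨅ B : Idx S, 𝓟 (Dset B)), fun B => ?_⟩
  exact (Ultrafilter.of_le _) (Filter.mem_iInf_of_mem B (Filter.mem_principal_self _))

end Ultra

end CellAux

open CellAux in
/-- Every cancellative commutative Hausdorff locally compact σ-compact
topological semigroup with open shifts has countable cellularity: every pairwise disjoint
family of nonempty open subsets is countable. -/
theorem countable_cellularity_of_locallyCompact_sigmaCompact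
    {S : Type*} [CommSemigroup S] [IsCancelMul S] [TopologicalSpace S]
    [T2Space S] [WeaklyLocallyCompactSpace S] [SigmaCompactSpace S] [ContinuousMul S]
    (ho : ∀ a : S, IsOpenMap fun s : S => a * s) :
    ∀ F : Set (Set S), (∀ U ∈ F, IsOpen U ∧ U.Nonempty) →
      F.Pairwise Disjoint → F.Countable := by
  classical
  intro F hF hFd
  rcases isEmpty_or_nonempty S with hS | hS
  · have : F = ∅ := by
      ext U
      simp only [Set.mem_empty_iff_false, iff_false]
      intro hU
      obtain ⟨x, -⟩ := (hF U hU).2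
      exact (IsEmpty.false x)
    simp [this]
  -- the reference compact set
  obtain ⟨K₀, hK₀c, hK₀nhds⟩ := exists_compact_mem_nhds (Classical.arbitrary S)
  have hΩ₀ : (interior K₀).Nonempty := ⟨_, mem_interior_iff_mem_nhds.2 hK₀nhds⟩
  have hK₀ne : K₀.Nonempty := hΩ₀.mono interior_subset
  obtain ⟨U, hU⟩ := exists_ultra (S := S) ho
  -- covers exist
  have hexcov : ∀ {K : Set S}, IsCompact K → ∀ V : Idx S, ∃ x t, covP K V.1 x t :=
    fun hK V => exists_cov ho hK V.2.1 V.2.2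
  have hdenom : ∀ V : Idx S, (0:ℝ) < (ind K₀ V.1 : ℝ) := by
    intro V
    have := one_le_ind (hexcov hK₀c V) hK₀ne
    exact_mod_cast Nat.lt_of_lt_of_le Nat.zero_lt_one this
  set h : Idx S → Set S → ℝ := fun V K => (ind K V.1 : ℝ) / (ind K₀ V.1 : ℝ) with hh
  have hnonnegV : ∀ (V : Idx S) K, 0 ≤ h V K :=
    fun V K => div_nonneg (Nat.cast_nonneg _) (Nat.cast_nonneg _)
  have hboundV : ∀ (K : Set S), IsCompact K → ∀ V : Idx S,
      h V K ≤ (ind K (interior K₀) : ℝ) := by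
    intro K hK V
    have hcomp : ind K V.1 ≤ ind K (interior K₀) * ind K₀ V.1 :=
      ind_comp_le (exists_cov ho hK isOpen_interior hΩ₀) (hexcov hK₀c V) interior_subset
    rw [hh]
    rw [div_le_iff₀ (hdenom V)]
    exact_mod_cast hcomp
  -- the limit content
  have lamex : ∀ K : Set S, IsCompact K → ∃ r : ℝ, Filter.Tendsto (fun V => h V K) U (𝓝 r) := by
    intro K hK
    have hle : ↑(U.map fun V => h V K) ≤ 𝓟 (Set.Icc (0:ℝ) (ind K (interior K₀) : ℝ)) := by
      rw [Filter.le_principal_iff, Ultrafilter.coe_map, Filter.mem_map]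
      exact Filter.mem_of_superset Filter.univ_mem
        (fun V _ => ⟨hnonnegV V K, hboundV K hK V⟩)
    obtain ⟨r, -, hr⟩ := isCompact_Icc.ultrafilter_le_nhds (U.map fun V => h V K) hle
    exact ⟨r, by rwa [Ultrafilter.coe_map] at hr⟩
  set lam : Set S → ℝ := fun K => if hK : IsCompact K then (lamex K hK).choose else 0
    with hlamdef
  have lam_tendsto : ∀ K (hK : IsCompact K),
      Filter.Tendsto (fun V => h V K) U (𝓝 (lam K)) := by
    intro K hK
    have : lam K = (lamex K hK).choose := by rw [hlamdef]; simp only [dif_pos hK]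
    rw [this]
    exact (lamex K hK).choose_spec
  have lam_mono : ∀ K L : Set S, IsCompact K → IsCompact L → K ⊆ L → lam K ≤ lam L := by
    intro K L hK hL hKL
    refine le_of_tendsto_of_tendsto' (lam_tendsto K hK) (lam_tendsto L hL) fun V => ?_
    have : ind K V.1 ≤ ind L V.1 := ind_mono (hexcov hL V) hKL
    show (ind K V.1 : ℝ) / (ind K₀ V.1 : ℝ) ≤ (ind L V.1 : ℝ) / (ind K₀ V.1 : ℝ)
    gcongr
  have lam_add : ∀ K L : Set S, IsCompact K → IsCompact L → Disjoint K L →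
      lam (K ∪ L) = lam K + lam L := by
    intro K L hK hL hd
    refine le_antisymm ?_ ?_
    · refine le_of_tendsto_of_tendsto' (lam_tendsto _ (hK.union hL))
        ((lam_tendsto K hK).add (lam_tendsto L hL)) fun V => ?_
      have : ind (K ∪ L) V.1 ≤ ind K V.1 + ind L V.1 :=
        ind_union_le (hexcov hK V) (hexcov hL V)
      show (ind (K ∪ L) V.1 : ℝ) / (ind K₀ V.1 : ℝ) ≤
        (ind K V.1 : ℝ) / (ind K₀ V.1 : ℝ) + (ind L V.1 : ℝ) / (ind K₀ V.1 : ℝ)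
      rw [← add_div]
      gcongr
      exact_mod_cast this
    · obtain ⟨Vs, hVso, hVsp, hVsep⟩ := exists_sep (Classical.arbitrary S) hK hL hd
      have hev : ∀ᶠ A : Idx S in U, h A K + h A L ≤ h A (K ∪ L) := by
        refine Filter.mem_of_superset (hU ⟨Vs, hVso, ⟨_, hVsp⟩⟩) ?_
        rintro A ⟨a, hsub⟩
        have hsep' : ∀ k ∈ K, ∀ l ∈ L, ∀ v ∈ A.1, ∀ w ∈ A.1, k * v ≠ l * w := by
          intro k hk l hl v hv w hw e
          obtain ⟨v', hv', rfl⟩ := hsub hv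
          obtain ⟨w', hw', rfl⟩ := hsub hw
          refine hVsep k hk l hl v' hv' w' hw' (mul_right_cancel (b := a) ?_)
          have e' : k * (a * v') = l * (a * w') := e
          calc (k * v') * a = k * (a * v') := by
                rw [mul_assoc, mul_comm v' a]
          _ = l * (a * w') := e'
          _ = (l * w') * a := Eq.symm (by rw [mul_assoc, mul_comm w' a])
        have hge : ind K A.1 + ind L A.1 ≤ ind (K ∪ L) A.1 :=
          ind_union_ge (hexcov (hK.union hL) A) hsep'
        show h A K + h A L ≤ h A (K ∪ L)
        show (ind K A.1 : ℝ) / (ind K₀ A.1 : ℝ) + (ind L A.1 : ℝ) / (ind K₀ A.1 : ℝ) ≤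
          (ind (K ∪ L) A.1 : ℝ) / (ind K₀ A.1 : ℝ)
        rw [← add_div]
        gcongr
        exact_mod_cast hge
      exact le_of_tendsto_of_tendsto ((lam_tendsto K hK).add (lam_tendsto L hL))
        (lam_tendsto _ (hK.union hL)) hev
  have lam_pos : ∀ C : Set S, IsCompact C → (interior C).Nonempty → 0 < lam C := by
    intro C hC hCi
    have hm1 : 1 ≤ ind K₀ (interior C) :=
      one_le_ind (exists_cov ho hK₀c isOpen_interior hCi) hK₀ne
    have hmpos : (0:ℝ) < (ind K₀ (interior C) : ℝ) := by exact_mod_cast hm1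
    have hlow : ∀ V : Idx S, 1 / (ind K₀ (interior C) : ℝ) ≤ h V C := by
      intro V
      have hcomp : ind K₀ V.1 ≤ ind K₀ (interior C) * ind C V.1 :=
        ind_comp_le (exists_cov ho hK₀c isOpen_interior hCi) (hexcov hC V) interior_subset
      rw [hh]
      rw [div_le_div_iff₀ hmpos (hdenom V)]
      calc (1:ℝ) * (ind K₀ V.1 : ℝ) = (ind K₀ V.1 : ℝ) := one_mul _
      _ ≤ (ind K₀ (interior C) : ℝ) * (ind C V.1 : ℝ) := by exact_mod_cast hcomp
      _ = (ind C V.1 : ℝ) * (ind K₀ (interior C) : ℝ) := mul_comm _ _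
    have : 1 / (ind K₀ (interior C) : ℝ) ≤ lam C :=
      ge_of_tendsto (lam_tendsto C hC) (Filter.Eventually.of_forall hlow)
    calc (0:ℝ) < 1 / (ind K₀ (interior C) : ℝ) := by positivity
    _ ≤ lam C := this
  have lam_nonneg : ∀ K : Set S, IsCompact K → 0 ≤ lam K := fun K hK =>
    ge_of_tendsto (lam_tendsto K hK) (Filter.Eventually.of_forall fun V => hnonnegV V K)
  -- finite superadditivity
  have hsum : ∀ t : Finset (Set S), (∀ C ∈ t, IsCompact C) →
      ((t : Set (Set S)).Pairwise Disjoint) → ∀ Q : Set S, IsCompact Q →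
      (∀ C ∈ t, C ⊆ Q) → ∑ C ∈ t, lam C ≤ lam Q := by
    intro t
    induction t using Finset.induction with
    | empty =>
      intro _ _ Q hQ _
      simpa using lam_nonneg Q hQ
    | @insert a s ha ih =>
      intro hc hd Q hQ hsub
      have hsc : ∀ C ∈ s, IsCompact C := fun C hC => hc C (Finset.mem_insert_of_mem hC)
      have hbc : IsCompact (⋃ C ∈ s, C) :=
        s.finite_toSet.isCompact_biUnion fun C hC => hsc C hC
      have hdisj : Disjoint a (⋃ C ∈ s, C) := by
        simp only [Set.disjoint_iUnion_right]
        intro C hC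
        exact hd (Finset.mem_insert_self a s) (Finset.mem_insert_of_mem hC)
          (fun he => ha (he ▸ hC))
      have h1 : ∑ C ∈ s, lam C ≤ lam (⋃ C ∈ s, C) := by
        refine ih hsc (hd.mono ?_) _ hbc fun C hC x hx => Set.mem_biUnion hC hx
        exact fun x hx => Finset.mem_insert_of_mem hx
      have h2 : lam a + lam (⋃ C ∈ s, C) = lam (a ∪ ⋃ C ∈ s, C) :=
        (lam_add a _ (hc a (Finset.mem_insert_self a s)) hbc hdisj).symm
      have h3 : lam (a ∪ ⋃ C ∈ s, C) ≤ lam Q := by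
        refine lam_mono _ _ ((hc a (Finset.mem_insert_self a s)).union hbc) hQ ?_
        refine Set.union_subset (hsub a (Finset.mem_insert_self a s)) ?_
        exact Set.iUnion₂_subset fun C hC => hsub C (Finset.mem_insert_of_mem hC)
      rw [Finset.sum_insert ha]
      linarith
  -- exhaustion and data for each member of the family
  set E := CompactExhaustion.choice S with hE
  have hdata : ∀ W : ↥F, ∃ p : ℕ × ℕ, ∃ C : Set S, IsCompact C ∧ (interior C).Nonempty ∧
      C ⊆ (W : Set S) ∧ C ⊆ E p.1 ∧ 1 / ((p.2 : ℝ) + 1) ≤ lam C := by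
    rintro ⟨W, hWF⟩
    obtain ⟨hWo, x, hx⟩ := hF W hWF
    obtain ⟨C, hCc, hxC, hCW⟩ := exists_compact_subset hWo hx
    obtain ⟨n, hn⟩ := E.exists_superset_of_isCompact hCc
    have hCpos := lam_pos C hCc ⟨x, hxC⟩
    obtain ⟨k, hk⟩ := exists_nat_gt (1 / lam C)
    refine ⟨(n, k), C, hCc, ⟨x, hxC⟩, hCW, hn, ?_⟩
    have hk1 : 1 / lam C < (k : ℝ) + 1 := hk.trans (by linarith)
    rw [div_lt_iff₀ hCpos] at hk1
    rw [div_le_iff₀ (by positivity)]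
    linarith
  choose φ C hCc hCi hCW hCE hCk using hdata
  -- fibers of φ are finite
  have hfib : ∀ p : ℕ × ℕ, (φ ⁻¹' {p} : Set ↥F).Finite := by
    intro p
    by_contra hinf
    have hinf' : (φ ⁻¹' {p} : Set ↥F).Infinite := hinf
    set M : ℕ := ⌈((p.2 : ℝ) + 1) * lam (E p.1)⌉₊ + 1 with hM
    obtain ⟨tS, htsub, htc⟩ := hinf'.exists_subset_card_eq M
    have htmem : ∀ W ∈ tS, φ W = p := fun W hW => htsub hW
    -- image of C is a pairwise disjoint finite family of compacts in E p.1
    have hCne : ∀ W : ↥F, (C W).Nonempty := fun W => (hCi W).mono interior_subset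
    have hinj : Set.InjOn C ↑tS := by
      intro W1 h1 W2 h2 he
      by_contra hne
      have hWne : (W1 : Set S) ≠ (W2 : Set S) := fun h => hne (Subtype.ext h)
      have hd : Disjoint (W1 : Set S) (W2 : Set S) := hFd W1.2 W2.2 hWne
      obtain ⟨c, hc⟩ := hCne W1
      exact Set.disjoint_left.1 hd (hCW W1 hc) (hCW W2 (he ▸ hc))
    have hsum1 : ∑ W ∈ tS, lam (C W) ≤ lam (E p.1) := by
      rw [← Finset.sum_image (f := lam) (g := C) (fun x hx y hy h => hinj (Finset.mem_coe.2 hx) (Finset.mem_coe.2 hy) h)]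
      refine hsum _ ?_ ?_ _ (E.isCompact p.1) ?_
      · intro D hD
        obtain ⟨W, -, rfl⟩ := Finset.mem_image.1 hD
        exact hCc W
      · intro D1 hD1 D2 hD2 hne
        obtain ⟨W1, hW1, rfl⟩ := Finset.mem_image.1 (by exact_mod_cast hD1)
        obtain ⟨W2, hW2, rfl⟩ := Finset.mem_image.1 (by exact_mod_cast hD2)
        have hWne : (W1 : Set S) ≠ (W2 : Set S) := by
          intro h
          exact hne (by rw [Subtype.ext h])
        exact Set.disjoint_of_subset (hCW W1) (hCW W2) (hFd W1.2 W2.2 hWne)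
      · intro D hD
        obtain ⟨W, hW, rfl⟩ := Finset.mem_image.1 hD
        have := hCE W
        rwa [htmem W hW] at this
    have hsum2 : (M : ℝ) * (1 / ((p.2 : ℝ) + 1)) ≤ ∑ W ∈ tS, lam (C W) := by
      have : ∀ W ∈ tS, 1 / ((p.2 : ℝ) + 1) ≤ lam (C W) := by
        intro W hW
        have := hCk W
        rwa [htmem W hW] at this
      calc (M : ℝ) * (1 / ((p.2 : ℝ) + 1))
          = ∑ _W ∈ tS, 1 / ((p.2 : ℝ) + 1) := by
            rw [Finset.sum_const, htc, nsmul_eq_mul]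
      _ ≤ ∑ W ∈ tS, lam (C W) := Finset.sum_le_sum this
    have hfinal : (M : ℝ) ≤ ((p.2 : ℝ) + 1) * lam (E p.1) := by
      have h := hsum2.trans hsum1
      rw [mul_one_div, div_le_iff₀ (by positivity : (0:ℝ) < (p.2 : ℝ) + 1)] at h
      linarith [h]
    have : (M : ℝ) ≤ (⌈((p.2 : ℝ) + 1) * lam (E p.1)⌉₊ : ℝ) :=
      hfinal.trans (Nat.le_ceil _)
    have hMle : M ≤ ⌈((p.2 : ℝ) + 1) * lam (E p.1)⌉₊ := by exact_mod_cast this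
    omega
  -- conclude
  have huniv : (Set.univ : Set ↥F).Countable := by
    have : (Set.univ : Set ↥F) = ⋃ p : ℕ × ℕ, φ ⁻¹' {p} := by
      ext W
      simp only [Set.mem_univ, true_iff, Set.mem_iUnion, Set.mem_preimage,
        Set.mem_singleton_iff]
      exact ⟨φ W, rfl⟩
    rw [this]
    exact Set.countable_iUnion fun p => (hfib p).countable
  rw [← Set.countable_coe_iff]
  exact Set.countable_univ_iff.mp huniv
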